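/- Let X be a compact finite-dimensional smooth real manifold without boundary, let T be a vector field on X (an assignment x ↦ T(x) ∈ T_x X), let N ∈ ℕ and let λ₁, …, λ_N be positive real numbers. For 1 ≤ j, ℓ ≤ N let f_{j,ℓ} : X → ℂ be smooth functions satisfying the eigenfunction equation (df_{j,ℓ})_x(T(x)) = i·λ_j·f_{j,ℓ}(x) for all x ∈ X, where (df_{j,ℓ})_x denotes the differential (mfderiv) of f_{j,ℓ} at x. Suppose φ : X → ℝ is a function (with no regularity assumed) such that Σ_{j=1}^N e^{2λ_j φ(x)} · Σ_{ℓ=1}^N |f_{j,ℓ}(x)|² = 1 for all x ∈ X. Then φ is smooth (C^∞) and Tφ ≡ 0, i.e. (dφ)_x(T(x)) = 0 for all x ∈ X. -/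

import Mathlib

set_option maxHeartbeats 1000000


open scoped Manifold
open Set Filter

theorem hasMFDerivAt_finset_sum
    {𝕜 : Type*} [NontriviallyNormedField 𝕜]
    {E : Type*} [NormedAddCommGroup E] [NormedSpace 𝕜 E]
    {H : Type*} [TopologicalSpace H] {I : ModelWithCorners 𝕜 E H}
    {M : Type*} [TopologicalSpace M] [ChartedSpace H M]
    {F : Type*} [NormedAddCommGroup F] [NormedSpace 𝕜 F]
    {ι : Type*} (s : Finset ι) (f : ι → M → F) (x : M)
    (f' : ι → TangentSpace I x →L[𝕜] F)
    (h : ∀ i ∈ s, HasMFDerivAt I 𝓘(𝕜, F) (f i) x (f' i)) :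
    HasMFDerivAt I 𝓘(𝕜, F) (fun y => ∑ i ∈ s, f i y) x (∑ i ∈ s, f' i) := by
  classical
  induction s using Finset.induction_on with
  | empty =>
    have e : (∑ i ∈ (∅ : Finset ι), f' i) = 0 := Finset.sum_empty
    refine (congrArg (HasMFDerivAt I 𝓘(𝕜, F) (fun y => ∑ i ∈ (∅ : Finset ι), f i y) x) e).mpr ?_
    have h0 : HasMFDerivAt I 𝓘(𝕜, F) (fun _ : M => (0 : F)) x 0 := hasMFDerivAt_const (0 : F) x
    simp only [Finset.sum_empty]
    exact h0
  | @insert a s ha ih =>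
      have h1 := h a (Finset.mem_insert_self a s)
      have h2 := ih fun i hi => h i (Finset.mem_insert_of_mem hi)
      have h3 := h1.add h2
      have hfun : (fun y => ∑ i ∈ insert a s, f i y) = f a + fun y => ∑ i ∈ s, f i y := by
        funext y; simp [Finset.sum_insert ha]
      have e : (∑ i ∈ insert a s, f' i) = f' a + ∑ i ∈ s, f' i := Finset.sum_insert ha
      rw [hfun]
      exact (congrArg (HasMFDerivAt I 𝓘(𝕜, F) (f a + fun y => ∑ i ∈ s, f i y) x) e).mpr h3

theorem normsq_hasMFDerivAt
    {E : Type*} [NormedAddCommGroup E] [NormedSpace ℝ E]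
    {H : Type*} [TopologicalSpace H] {I : ModelWithCorners ℝ E H}
    {M : Type*} [TopologicalSpace M] [ChartedSpace H M]
    (F : M → ℂ) (x : M) (hF : MDifferentiableAt I 𝓘(ℝ, ℂ) F x) :
    ∃ D : TangentSpace I x →L[ℝ] ℝ,
      HasMFDerivAt I 𝓘(ℝ, ℝ) (fun y => ‖F y‖ ^ 2) x D ∧
      ∀ v : TangentSpace I x, D v = 2 * ((F x).re * (mfderiv I 𝓘(ℝ, ℂ) F x v).re
        + (F x).im * (mfderiv I 𝓘(ℝ, ℂ) F x v).im) := by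
  have hF' : HasMFDerivAt I 𝓘(ℝ, ℂ) F x (mfderiv I 𝓘(ℝ, ℂ) F x) := hF.hasMFDerivAt
  set F' := mfderiv I 𝓘(ℝ, ℂ) F x with hF'def
  have hreC : HasMFDerivAt 𝓘(ℝ, ℂ) 𝓘(ℝ, ℝ) (⇑Complex.reCLM) (F x) Complex.reCLM :=
    Complex.reCLM.hasFDerivAt.hasMFDerivAt
  have himC : HasMFDerivAt 𝓘(ℝ, ℂ) 𝓘(ℝ, ℝ) (⇑Complex.imCLM) (F x) Complex.imCLM :=
    Complex.imCLM.hasFDerivAt.hasMFDerivAt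
  have hre := hreC.comp x hF'
  have him := himC.comp x hF'
  have hmulre := hre.mul hre
  have hmulim := him.mul him
  have hadd := hmulre.add hmulim
  refine ⟨(⇑Complex.reCLM ∘ F) x • Complex.reCLM.comp F' + (⇑Complex.reCLM ∘ F) x • Complex.reCLM.comp F' +
      ((⇑Complex.imCLM ∘ F) x • Complex.imCLM.comp F' + (⇑Complex.imCLM ∘ F) x • Complex.imCLM.comp F'), ?_, ?_⟩
  · have hfun : (fun y => ‖F y‖ ^ 2) =
        (⇑Complex.reCLM ∘ F) * (⇑Complex.reCLM ∘ F) + (⇑Complex.imCLM ∘ F) * (⇑Complex.imCLM ∘ F) := by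
      funext y
      simp only [Pi.add_apply, Pi.mul_apply, Function.comp_apply, Complex.reCLM_apply,
        Complex.imCLM_apply, Complex.sq_norm, Complex.normSq_apply]
    rw [hfun]
    exact hadd
  · intro v
    simp only [ContinuousLinearMap.add_apply, ContinuousLinearMap.coe_smul', Pi.smul_apply,
      ContinuousLinearMap.comp_apply, Complex.reCLM_apply, Complex.imCLM_apply,
      Function.comp_apply, smul_eq_mul]
    ring_nf
    rfl


/-- On a compact smooth manifold `X` without boundary with a vector field
`T`, if smooth functions `f_{j,ℓ} : X → ℂ` satisfy `T f_{j,ℓ} = i λ_j f_{j,ℓ}` with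
`λ_j > 0`, and a function `φ : X → ℝ` (with no regularity assumed) satisfies
`Σ_j e^{2λ_j φ} Σ_ℓ |f_{j,ℓ}|² = 1`, then `φ` is smooth and `Tφ ≡ 0`. -/
theorem stmt6
    {E : Type*} [NormedAddCommGroup E] [NormedSpace ℝ E] [FiniteDimensional ℝ E]
    {Hm : Type*} [TopologicalSpace Hm] (I : ModelWithCorners ℝ E Hm) [I.Boundaryless]
    {X : Type*} [TopologicalSpace X] [ChartedSpace Hm X]
    [IsManifold I (⊤ : ℕ∞) X] [CompactSpace X]
    (T : (x : X) → TangentSpace I x)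
    (N : ℕ) (lam : Fin N → ℝ) (hlam : ∀ j, 0 < lam j)
    (f : Fin N → Fin N → X → ℂ)
    (hf : ∀ j l, ContMDiff I 𝓘(ℝ, ℂ) (⊤ : ℕ∞) (f j l))
    (heig : ∀ j l (x : X),
      mfderiv I 𝓘(ℝ, ℂ) (f j l) x (T x) = Complex.I * (lam j : ℂ) * f j l x)
    (φ : X → ℝ)
    (hφ : ∀ x : X,
      ∑ j, Real.exp (2 * lam j * φ x) * ∑ l, ‖f j l x‖ ^ 2 = 1) :
    ContMDiff I 𝓘(ℝ, ℝ) (⊤ : ℕ∞) φ ∧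
      ∀ x : X, mfderiv I 𝓘(ℝ, ℝ) φ x (T x) = 0 := by
  classical
  have hone : ((⊤ : ℕ∞) : WithTop ℕ∞) ≠ 0 := by
    simp
  have hgnn : ∀ (j : Fin N) (x : X), (0:ℝ) ≤ ∑ l, ‖f j l x‖ ^ 2 :=
    fun j x => Finset.sum_nonneg fun l _ => by positivity
  have hgpos : ∀ x : X, ∃ j, 0 < ∑ l, ‖f j l x‖ ^ 2 := by
    intro x
    by_contra hcon
    push_neg at hcon
    have h0 : ∀ j : Fin N, (∑ l, ‖f j l x‖ ^ 2) = 0 :=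
      fun j => le_antisymm (hcon j) (hgnn j x)
    have h1 := hφ x
    rw [Finset.sum_eq_zero (fun j _ => by rw [h0 j, mul_zero])] at h1
    exact zero_ne_one h1
  have hgsm : ∀ j : Fin N, ContMDiff I 𝓘(ℝ, ℝ) (⊤ : ℕ∞) (fun x => ∑ l, ‖f j l x‖ ^ 2) := by
    intro j x
    apply contMDiffAt_finset_sum
    intro l _
    have h1 : ContDiff ℝ (⊤ : ℕ∞) (fun z : ℂ => ‖z‖ ^ 2) := by
      have h2 : (fun z : ℂ => ‖z‖ ^ 2) =
          fun z : ℂ => Complex.reCLM z * Complex.reCLM z + Complex.imCLM z * Complex.imCLM z := by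
        funext z
        simp only [Complex.reCLM_apply, Complex.imCLM_apply,
          Complex.sq_norm, Complex.normSq_apply]
      rw [h2]
      exact (Complex.reCLM.contDiff.mul Complex.reCLM.contDiff).add
        (Complex.imCLM.contDiff.mul Complex.imCLM.contDiff)
    exact (h1.comp_contMDiff (hf j l)) x
  have hgd : ∀ (j : Fin N) (x : X), ∃ G' : TangentSpace I x →L[ℝ] ℝ,
      HasMFDerivAt I 𝓘(ℝ, ℝ) (fun y => ∑ l, ‖f j l y‖ ^ 2) x G' ∧ G' (T x) = 0 := by
    intro j x
    have key : ∀ l : Fin N, ∃ D : TangentSpace I x →L[ℝ] ℝ,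
        HasMFDerivAt I 𝓘(ℝ, ℝ) (fun y => ‖f j l y‖ ^ 2) x D ∧ D (T x) = 0 := by
      intro l
      obtain ⟨D, hD, hDval⟩ := normsq_hasMFDerivAt (f j l) x ((hf j l).mdifferentiableAt (by simp))
      refine ⟨D, hD, ?_⟩
      rw [hDval (T x)]
      rw [show (mfderiv I 𝓘(ℝ, ℂ) (f j l) x (T x) : ℂ) = Complex.I * (lam j : ℂ) * f j l x from
        heig j l x]
      simp only [Complex.mul_re, Complex.mul_im, Complex.I_re, Complex.I_im,
        Complex.ofReal_re, Complex.ofReal_im]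
      ring
    choose D hD hD0 using key
    refine ⟨∑ l, D l, hasMFDerivAt_finset_sum _ _ _ _ (fun l _ => hD l), ?_⟩
    simp [ContinuousLinearMap.sum_apply, hD0]
  -- smoothness of φ
  have hsm : ∀ x₀ : X, ContMDiffAt I 𝓘(ℝ, ℝ) (⊤ : ℕ∞) φ x₀ := by
    intro x₀
    have hx₀mem : x₀ ∈ (extChartAt I x₀).source := mem_extChartAt_source x₀
    set ψ := extChartAt I x₀ with hψdef
    set y₀ : E := ψ x₀ with hy₀
    set t₀ : ℝ := φ x₀ with ht₀
    have hψx : ψ.symm y₀ = x₀ := ψ.left_inv hx₀mem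
    have hgE : ∀ j : Fin N, ContDiffAt ℝ (⊤ : ℕ∞)
        ((fun x => ∑ l, ‖f j l x‖ ^ 2) ∘ ψ.symm) y₀ := by
      intro j
      have h1 := (hgsm j) x₀
      rw [contMDiffAt_iff] at h1
      have h2 := h1.2
      rw [I.range_eq_univ, contDiffWithinAt_univ] at h2
      simpa [hψdef, hy₀, extChartAt_coe, extChartAt_coe_symm, chartAt_self_eq, Function.comp_def] using h2
    obtain ⟨j₀, hj₀⟩ := hgpos x₀
    set G : E × ℝ → ℝ :=
      fun p => ∑ j, Real.exp (2 * lam j * p.2) * (∑ l, ‖f j l (ψ.symm p.1)‖ ^ 2) with hGdef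
    have hGsm : ContDiffAt ℝ (⊤ : ℕ∞) G (y₀, t₀) := by
      apply ContDiffAt.sum
      intro j _
      apply ContDiffAt.mul
      · apply ContDiff.contDiffAt
        exact Real.contDiff_exp.comp (contDiff_const.mul contDiff_snd)
      · have hcomp := ContDiffAt.comp (y₀, t₀) (hgE j) contDiffAt_fst
        exact hcomp
    have hGa : G (y₀, t₀) = 1 := by
      simp only [hGdef, hψx]
      rw [ht₀]
      exact hφ x₀
    have hD : HasFDerivAt G (fderiv ℝ G (y₀, t₀)) (y₀, t₀) :=
      (hGsm.differentiableAt hone).hasFDerivAt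
    set Dg := fderiv ℝ G (y₀, t₀) with hDgdef
    have hcval : Dg ((0 : E), (1 : ℝ)) =
        ∑ j, 2 * lam j * Real.exp (2 * lam j * t₀) * (∑ l, ‖f j l x₀‖ ^ 2) := by
      have h1 : HasDerivAt (fun t => G (y₀, t)) (Dg ((0 : E), (1 : ℝ))) t₀ := by
        have := hD.comp_hasDerivAt t₀ ((hasDerivAt_const t₀ y₀).prodMk (hasDerivAt_id t₀))
        exact this
      have h2 : HasDerivAt (fun t => G (y₀, t))
          (∑ j, 2 * lam j * Real.exp (2 * lam j * t₀) * (∑ l, ‖f j l x₀‖ ^ 2)) t₀ := by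
        have hfun : (fun t => G (y₀, t)) =
            fun t => ∑ j, Real.exp (2 * lam j * t) * (∑ l, ‖f j l x₀‖ ^ 2) := by
          funext t; simp only [hGdef, hψx]
        rw [hfun]
        apply HasDerivAt.fun_sum
        intro j _
        have h3 : HasDerivAt (fun t : ℝ => 2 * lam j * t) (2 * lam j) t₀ := by
          simpa using (hasDerivAt_id t₀).const_mul (2 * lam j)
        have h4 := (h3.exp).mul_const (∑ l, ‖f j l x₀‖ ^ 2)
        convert h4 using 1
        · rfl
        · ring
      exact h1.unique h2
    have hcpos : 0 < Dg ((0 : E), (1 : ℝ)) := by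
      rw [hcval]
      apply Finset.sum_pos'
      · intro j _
        have h5 := Real.exp_pos (2 * lam j * t₀)
        have h6 := hlam j
        have h7 := hgnn j x₀
        positivity
      · refine ⟨j₀, Finset.mem_univ _, ?_⟩
        have h5 := Real.exp_pos (2 * lam j₀ * t₀)
        have h6 := hlam j₀
        positivity
    set HH : E × ℝ → E × ℝ := fun p => (p.1, G p) with hHHdef
    have hHsm : ContDiffAt ℝ (⊤ : ℕ∞) HH (y₀, t₀) := contDiffAt_fst.prodMk hGsm
    set H' : (E × ℝ) →L[ℝ] (E × ℝ) := (ContinuousLinearMap.fst ℝ E ℝ).prod Dg with hH'def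
    have hH' : HasFDerivAt HH H' (y₀, t₀) := (hasFDerivAt_fst).prodMk hD
    have hinj : Function.Injective H' := by
      have hker : ∀ r : E × ℝ, H' r = 0 → r = 0 := by
        intro r hr
        rw [hH'def] at hr
        rw [Prod.ext_iff] at hr
        simp only [ContinuousLinearMap.prod_apply, ContinuousLinearMap.coe_fst',
          Prod.fst_zero, Prod.snd_zero] at hr
        obtain ⟨hr1, hr2⟩ := hr
        have h3 : r = r.2 • ((0 : E), (1 : ℝ)) := by
          rw [Prod.ext_iff]
          constructor
          · simpa using hr1
          · simp
        rw [h3, map_smul, smul_eq_mul] at hr2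
        have h5 : r.2 = 0 := by
          rcases mul_eq_zero.mp hr2 with h | h
          · exact h
          · exact absurd h (ne_of_gt hcpos)
        rw [h3, h5, zero_smul]
      intro p q hpq
      have h6 : H' (p - q) = 0 := by rw [map_sub, hpq, sub_self]
      have h7 := hker _ h6
      exact sub_eq_zero.mp h7
    set e : (E × ℝ) ≃L[ℝ] (E × ℝ) :=
      (LinearEquiv.ofInjectiveEndo (H' : (E × ℝ) →ₗ[ℝ] (E × ℝ)) hinj).toContinuousLinearEquiv
      with hedef
    have hH'e : HasFDerivAt HH ((e : (E × ℝ) →L[ℝ] (E × ℝ))) (y₀, t₀) := by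
      have hcoe : ((e : (E × ℝ) →L[ℝ] (E × ℝ))) = H' := ContinuousLinearMap.ext fun p => rfl
      rw [hcoe]; exact hH'
    have hstrict : HasStrictFDerivAt HH ((e : (E × ℝ) →L[ℝ] (E × ℝ))) (y₀, t₀) :=
      hHsm.hasStrictFDerivAt' hH'e hone
    set linv : E × ℝ → E × ℝ := hstrict.localInverse HH e (y₀, t₀) with hlinvdef
    have hHa : HH (y₀, t₀) = (y₀, 1) := by
      simp only [hHHdef]
      rw [hGa]
    have hlinv_cd : ContDiffAt ℝ (⊤ : ℕ∞) linv ((y₀ : E), (1 : ℝ)) := by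
      have h := hHsm.to_localInverse hH'e hone
      rw [hHa] at h
      exact h
    have hev : ∀ᶠ p in nhds ((y₀ : E), (1 : ℝ)), HH (linv p) = p := by
      have h := hstrict.eventually_right_inverse
      rw [hHa] at h
      exact h
    have husm : ContDiffAt ℝ (⊤ : ℕ∞) (fun y : E => (linv (y, 1)).2) y₀ := by
      have h1 : ContDiffAt ℝ (⊤ : ℕ∞) (fun y : E => linv (y, 1)) y₀ :=
        ContDiffAt.comp y₀ hlinv_cd (contDiffAt_id.prodMk contDiffAt_const)
      exact ContDiffAt.comp y₀ contDiffAt_snd h1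
    have htarget_ev : ∀ᶠ y in nhds y₀, y ∈ ψ.target :=
      Filter.eventually_of_mem (extChartAt_target_mem_nhds x₀) fun y hy => hy
    have hmatch : ∀ᶠ y in nhds y₀, (φ ∘ ψ.symm) y = (fun y : E => (linv (y, 1)).2) y := by
      have hball : ∀ᶠ y in nhds y₀, HH (linv (y, 1)) = (y, 1) := by
        have hcont : Filter.Tendsto (fun y : E => (y, (1 : ℝ))) (nhds y₀) (nhds (y₀, 1)) :=
          (continuous_id.prodMk continuous_const).continuousAt
        exact hcont.eventually hev
      filter_upwards [hball, htarget_ev] with y h1 h2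
      have hGy : G (y, φ (ψ.symm y)) = 1 := by
        simp only [hGdef]
        exact hφ (ψ.symm y)
      obtain ⟨h1a, h1b⟩ : (linv (y, 1)).1 = y ∧ G (linv (y, 1)) = 1 := by
        have h1' := h1
        rw [hHHdef] at h1'
        rw [Prod.ext_iff] at h1'
        simpa using h1'
      have hl2 : linv (y, 1) = (y, (linv (y, 1)).2) := Prod.ext h1a rfl
      rw [hl2] at h1b
      have hmono : StrictMono (fun t => G (y, t)) := by
        intro t t' htt'
        simp only [hGdef]
        apply Finset.sum_lt_sum
        · intro j _
          apply mul_le_mul_of_nonneg_right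
          · exact Real.exp_le_exp.2 (by nlinarith [hlam j])
          · exact hgnn j (ψ.symm y)
        · obtain ⟨j₁, hj₁⟩ := hgpos (ψ.symm y)
          refine ⟨j₁, Finset.mem_univ _, ?_⟩
          apply mul_lt_mul_of_pos_right _ hj₁
          exact Real.exp_lt_exp.2 (by nlinarith [hlam j₁])
      exact hmono.injective (hGy.trans h1b.symm)
    rw [contMDiffAt_iff]
    constructor
    · have hevx : φ =ᶠ[nhds x₀] fun x => (linv (ψ x, 1)).2 := by
        have hψc : ContinuousAt (ψ : X → E) x₀ := continuousAt_extChartAt (I := I) x₀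
        have h1 : ∀ᶠ x in nhds x₀, (φ ∘ ψ.symm) (ψ x) = (linv (ψ x, 1)).2 :=
          hψc.eventually hmatch
        filter_upwards [h1, extChartAt_source_mem_nhds (I := I) x₀] with x hx1 hx2
        rw [← hx1]
        simp only [Function.comp_apply]
        rw [ψ.left_inv hx2]
      have hcont2 : ContinuousAt (fun x => (linv (ψ x, 1)).2) x₀ := by
        have hψc : ContinuousAt (ψ : X → E) x₀ := continuousAt_extChartAt (I := I) x₀
        have hinner : ContinuousAt (fun x : X => ((ψ x : E), (1 : ℝ))) x₀ :=
          hψc.prodMk continuousAt_const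
        have hmid : ContinuousAt (fun x : X => linv (ψ x, 1)) x₀ :=
          ContinuousAt.comp hlinv_cd.continuousAt hinner
        exact ContinuousAt.comp continuous_snd.continuousAt hmid
      exact hcont2.congr hevx.symm
    · rw [I.range_eq_univ, contDiffWithinAt_univ]
      have hred : (extChartAt 𝓘(ℝ, ℝ) (φ x₀) ∘ φ ∘ (extChartAt I x₀).symm) = φ ∘ ψ.symm := by
        rw [extChartAt_model_space_eq_id]
        rfl
      rw [hred]
      exact husm.congr_of_eventuallyEq hmatch
  refine ⟨fun x => hsm x, ?_⟩
  intro x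
  have hφd : MDifferentiableAt I 𝓘(ℝ, ℝ) φ x := (hsm x).mdifferentiableAt (by simp)
  have hP : HasMFDerivAt I 𝓘(ℝ, ℝ) φ x (mfderiv I 𝓘(ℝ, ℝ) φ x) := hφd.hasMFDerivAt
  set P : TangentSpace I x →L[ℝ] ℝ := mfderiv I 𝓘(ℝ, ℝ) φ x with hPdef
  choose Gd hGd hGd0 using fun j => hgd j x
  have hexpd : ∀ j : Fin N, HasMFDerivAt I 𝓘(ℝ, ℝ) (fun y => Real.exp (2 * lam j * φ y)) x
      (Real.exp (2 * lam j * φ x) • ((2 * lam j) • P)) := by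
    intro j
    have h1 : HasMFDerivAt I 𝓘(ℝ, ℝ) (fun y => 2 * lam j * φ y) x ((2 * lam j) • P) := by
      have hfun : (fun y => 2 * lam j * φ y) = (2 * lam j) • φ := by
        funext y; simp [Pi.smul_apply, smul_eq_mul]
      rw [hfun]
      exact hP.const_smul (2 * lam j)
    have h2 : HasMFDerivAt 𝓘(ℝ, ℝ) 𝓘(ℝ, ℝ) Real.exp (2 * lam j * φ x)
        (ContinuousLinearMap.smulRight (1 : ℝ →L[ℝ] ℝ) (Real.exp (2 * lam j * φ x))) :=
      (Real.hasDerivAt_exp _).hasFDerivAt.hasMFDerivAt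
    have h3 := h2.comp x h1
    have hc : (ContinuousLinearMap.smulRight (1 : ℝ →L[ℝ] ℝ)
          (Real.exp (2 * lam j * φ x))).comp ((2 * lam j) • P)
        = Real.exp (2 * lam j * φ x) • ((2 * lam j) • P) := by
      ext v
      simp only [ContinuousLinearMap.coe_comp', Function.comp_apply,
        ContinuousLinearMap.coe_smul', Pi.smul_apply, ContinuousLinearMap.smulRight_apply,
        ContinuousLinearMap.one_apply, smul_eq_mul]
      ring_nf
    exact (congrArg (HasMFDerivAt I 𝓘(ℝ, ℝ) (fun y => Real.exp (2 * lam j * φ y)) x) hc).mp h3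
  have htermd : ∀ j : Fin N, HasMFDerivAt I 𝓘(ℝ, ℝ)
      (fun y => Real.exp (2 * lam j * φ y) * (∑ l, ‖f j l y‖ ^ 2)) x
      (Real.exp (2 * lam j * φ x) • Gd j
        + (∑ l, ‖f j l x‖ ^ 2) • (Real.exp (2 * lam j * φ x) • ((2 * lam j) • P))) := by
    intro j
    have hmul := (hexpd j).mul (hGd j)
    have hfun : (fun y => Real.exp (2 * lam j * φ y) * (∑ l, ‖f j l y‖ ^ 2)) =
        (fun y => Real.exp (2 * lam j * φ y)) * (fun y => ∑ l, ‖f j l y‖ ^ 2) := rfl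
    rw [hfun]
    exact hmul
  have htotd := hasMFDerivAt_finset_sum Finset.univ
      (fun j y => Real.exp (2 * lam j * φ y) * (∑ l, ‖f j l y‖ ^ 2)) x
      (fun j => Real.exp (2 * lam j * φ x) • Gd j
        + (∑ l, ‖f j l x‖ ^ 2) • (Real.exp (2 * lam j * φ x) • ((2 * lam j) • P)))
      (fun j _ => htermd j)
  have hconstd : HasMFDerivAt I 𝓘(ℝ, ℝ)
      (fun y => ∑ j, Real.exp (2 * lam j * φ y) * (∑ l, ‖f j l y‖ ^ 2)) x 0 := by
    have hfun : (fun y : X => ∑ j, Real.exp (2 * lam j * φ y) * (∑ l, ‖f j l y‖ ^ 2)) =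
        fun _ => (1 : ℝ) := funext hφ
    rw [hfun]
    exact hasMFDerivAt_const 1 x
  have h0 : (∑ j : Fin N, (Real.exp (2 * lam j * φ x) • Gd j
      + (∑ l, ‖f j l x‖ ^ 2) • (Real.exp (2 * lam j * φ x) • ((2 * lam j) • P)))) =
      (0 : TangentSpace I x →L[ℝ] ℝ) := by
    exact htotd.mfderiv.symm.trans hconstd.mfderiv
  have h0v := congrArg (fun L : TangentSpace I x →L[ℝ] ℝ => L (T x)) h0
  simp only [ContinuousLinearMap.sum_apply, ContinuousLinearMap.add_apply,
    ContinuousLinearMap.coe_smul', Pi.smul_apply, smul_eq_mul,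
    ContinuousLinearMap.zero_apply, hGd0, mul_zero, zero_add] at h0v
  have hfac : ∑ j, (∑ l, ‖f j l x‖ ^ 2) * (Real.exp (2 * lam j * φ x) * (2 * lam j * P (T x)))
      = (∑ j, (∑ l, ‖f j l x‖ ^ 2) * Real.exp (2 * lam j * φ x) * (2 * lam j)) * P (T x) := by
    rw [Finset.sum_mul]
    apply Finset.sum_congr rfl
    intro j _
    ring
  rw [hfac] at h0v
  have hcoef : 0 < ∑ j, (∑ l, ‖f j l x‖ ^ 2) * Real.exp (2 * lam j * φ x) * (2 * lam j) := by
    apply Finset.sum_pos'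
    · intro j _
      have h5 := Real.exp_pos (2 * lam j * φ x)
      have h6 := hlam j
      have h7 := hgnn j x
      positivity
    · obtain ⟨j₁, hj₁⟩ := hgpos x
      refine ⟨j₁, Finset.mem_univ _, ?_⟩
      have h5 := Real.exp_pos (2 * lam j₁ * φ x)
      have h6 := hlam j₁
      positivity
  rcases mul_eq_zero.mp h0v with h | h
  · exact absurd h (ne_of_gt hcoef)
  · exact h
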